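/- If P is an earliest arrival path from s to z with dep(P) ≥ rt (i.e., arr(P) is minimum among all time-respecting paths from s to z departing at or after time rt), then there exists a useful dominating path Q from s to z with the same route as P, dep(Q) = dep(P), and arr(Q) = arr(P). -/

import Mathlib

/-- A temporal edge with tail, head, departure time and arrival time. -/
structure TEdge (V : Type) where
  tail : V
  head : V
  dep : ℕ
  arr : ℕ

/-- A temporal graph: a set of temporal edges, each with arrival strictly after departure. -/
structure TGraph (V : Type) where
  edges : Set (TEdge V)
  valid : ∀ e ∈ edges, e.dep < e.arr

variable {V : Type}

/-- Time-respecting path: nonempty sequence of edges of `G`, consecutive edges share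
endpoints and each edge departs no earlier than the previous edge arrives. -/
def TRP (G : TGraph V) (p : List (TEdge V)) : Prop :=
  p ≠ [] ∧ (∀ e ∈ p, e ∈ G.edges) ∧
    List.Chain' (fun e f => e.head = f.tail ∧ e.arr ≤ f.dep) p

/-- Departure time of a path (departure of its first edge). -/
def pdep (p : List (TEdge V)) : ℕ := (p.head?.elim 0 TEdge.dep)

/-- Arrival time of a path (arrival of its last edge). -/
def parr (p : List (TEdge V)) : ℕ := (p.getLast?.elim 0 TEdge.arr)

/-- Start vertex of a path. -/
def startV (p : List (TEdge V)) : Option V := p.head?.map TEdge.tail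

/-- End vertex of a path. -/
def endV (p : List (TEdge V)) : Option V := p.getLast?.map TEdge.head

/-- The route (sequence of vertices) a path goes through. -/
def routeOf (p : List (TEdge V)) : List V :=
  p.map TEdge.tail ++ (p.getLast?.elim [] fun e => [e.head])

/-- `ℙ(s,z,r,t)`: time-respecting paths from `s` to `z` through route `r` departing at `t`. -/
def PathsIn (G : TGraph V) (s z : V) (r : List V) (t : ℕ) : Set (List (TEdge V)) :=
  {p | TRP G p ∧ startV p = some s ∧ endV p = some z ∧ routeOf p = r ∧ pdep p = t}

/-- Dominating path in `ℙ(s,z,r,t)`. -/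
def DominatingIn (G : TGraph V) (s z : V) (r : List V) (t : ℕ) (p : List (TEdge V)) : Prop :=
  p ∈ PathsIn G s z r t ∧ ∀ q ∈ PathsIn G s z r t, parr p ≤ parr q

/-- A path is dominating with respect to its own start vertex, route and departure time. -/
def DomSelf (G : TGraph V) (p : List (TEdge V)) : Prop :=
  TRP G p ∧ ∀ q, TRP G q → startV q = startV p → routeOf q = routeOf p →
    pdep q = pdep p → parr p ≤ parr q

/-- Useful dominating path: every (nonempty) prefix is dominating on its own route
and departure time. -/
def UsefulDom (G : TGraph V) (p : List (TEdge V)) : Prop :=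
  ∀ j, 1 ≤ j → j ≤ p.length → DomSelf G (p.take j)

/-- The edge relation of the edge-scan-dependency graph: `v_e → v_f` iff `f` departs
from the head of `e` no earlier than `e` arrives and no parallel edge with the same
endpoints departs no earlier than `arr e` and arrives strictly before `f`. -/
def ESDGAdj (G : TGraph V) (e f : TEdge V) : Prop :=
  e ∈ G.edges ∧ f ∈ G.edges ∧ e.head = f.tail ∧ e.arr ≤ f.dep ∧
    ¬ ∃ g ∈ G.edges, g.tail = f.tail ∧ g.head = f.head ∧ e.arr ≤ g.dep ∧ g.arr < f.arr

/-- A directed path in the ESDG, given as the corresponding sequence of temporal edges. -/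
def ESDGPath (G : TGraph V) (p : List (TEdge V)) : Prop :=
  p ≠ [] ∧ (∀ e ∈ p, e ∈ G.edges) ∧ List.Chain' (ESDGAdj G) p

/-- Earliest arrival path from `s` to `z` with ready time `rt`. -/
def EAPath (G : TGraph V) (s z : V) (rt : ℕ) (p : List (TEdge V)) : Prop :=
  TRP G p ∧ startV p = some s ∧ endV p = some z ∧ rt ≤ pdep p ∧
    ∀ q, TRP G q → startV q = some s → endV q = some z → rt ≤ pdep q → parr p ≤ parr q

/-- Fastest path from `s` to `z`: minimizes journey time `arr - dep`. -/
def FastestPath (G : TGraph V) (s z : V) (p : List (TEdge V)) : Prop :=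
  TRP G p ∧ startV p = some s ∧ endV p = some z ∧
    ∀ q, TRP G q → startV q = some s → endV q = some z →
      parr p - pdep p ≤ parr q - pdep q


section Aux

lemma exists_min_arr {S : Set (TEdge V)} (h : S.Nonempty) :
    ∃ f ∈ S, ∀ g ∈ S, f.arr ≤ g.arr := by
  obtain ⟨n, ⟨f, hf, hfn⟩, hmin⟩ := Nat.lt_wfRel.wf.has_min (TEdge.arr '' S) (h.image _)
  refine ⟨f, hf, fun g hg => ?_⟩
  have := hmin g.arr ⟨g, hg, rfl⟩
  change ¬ g.arr < n at this
  omega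

lemma parr_concat (l : List (TEdge V)) (e : TEdge V) : parr (l ++ [e]) = e.arr := by
  simp [parr, List.getLast?_concat]

lemma pdep_concat {l : List (TEdge V)} (h : l ≠ []) (e : TEdge V) :
    pdep (l ++ [e]) = pdep l := by
  cases l with
  | nil => simp at h
  | cons a t => simp [pdep]

lemma startV_concat {l : List (TEdge V)} (h : l ≠ []) (e : TEdge V) :
    startV (l ++ [e]) = startV l := by
  cases l with
  | nil => simp at h
  | cons a t => simp [startV]

lemma endV_concat (l : List (TEdge V)) (e : TEdge V) : endV (l ++ [e]) = some e.head := by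
  simp [endV, List.getLast?_concat]

lemma routeOf_concat (l : List (TEdge V)) (e : TEdge V) :
    routeOf (l ++ [e]) = l.map TEdge.tail ++ [e.tail, e.head] := by
  simp [routeOf, List.getLast?_concat]

lemma routeOf_length {p : List (TEdge V)} (h : p ≠ []) :
    (routeOf p).length = p.length + 1 := by
  obtain ⟨l, e, hq⟩ := (List.eq_nil_or_concat p).resolve_left h
  rw [List.concat_eq_append] at hq
  subst hq
  simp [routeOf_concat]

lemma endV_eq {p : List (TEdge V)} (h : p ≠ []) :
    endV p = some ((p.getLast h).head) := by
  simp [endV, List.getLast?_eq_getLast h]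

lemma routeOf_eq_of_endV {p : List (TEdge V)} (h : p ≠ []) {v : V}
    (hv : endV p = some v) : routeOf p = p.map TEdge.tail ++ [v] := by
  rw [endV_eq h] at hv
  simp only [Option.some.injEq] at hv
  simp [routeOf, List.getLast?_eq_getLast h, hv]

lemma parr_eq {p : List (TEdge V)} (h : p ≠ []) : parr p = (p.getLast h).arr := by
  simp [parr, List.getLast?_eq_getLast h]

lemma TRP_concat_decomp {G : TGraph V} {l : List (TEdge V)} {e : TEdge V}
    (hl : l ≠ []) (h : TRP G (l ++ [e])) :
    TRP G l ∧ endV l = some e.tail ∧ parr l ≤ e.dep ∧ e ∈ G.edges := by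
  obtain ⟨-, hmem, hch⟩ := h
  change List.IsChain _ _ at hch
  rw [List.isChain_append] at hch
  obtain ⟨hch1, -, hconn⟩ := hch
  have hconn' := hconn (l.getLast hl) (by simp [List.getLast?_eq_getLast hl]) e (by simp)
  refine ⟨⟨hl, fun f hf => hmem f (by simp [hf]), hch1⟩, ?_, ?_, hmem e (by simp)⟩
  · rw [endV_eq hl, hconn'.1]
  · rw [parr_eq hl]; exact hconn'.2

lemma TRP_concat_build {G : TGraph V} {l : List (TEdge V)} {e : TEdge V}
    (h : TRP G l) (he : e ∈ G.edges) (h1 : endV l = some e.tail) (h2 : parr l ≤ e.dep) :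
    TRP G (l ++ [e]) := by
  obtain ⟨hl, hmem, hch⟩ := h
  refine ⟨by simp, ?_, ?_⟩
  · intro f hf
    rcases List.mem_append.mp hf with hf | hf
    · exact hmem f hf
    · simp at hf; subst hf; exact he
  · change List.IsChain _ _
    rw [List.isChain_append]
    refine ⟨hch, List.isChain_singleton e, ?_⟩
    intro x hx y hy
    simp at hy; subst hy
    rw [List.getLast?_eq_getLast hl] at hx
    simp at hx; subst hx
    rw [endV_eq hl] at h1
    simp at h1
    rw [parr_eq hl] at h2
    exact ⟨h1, h2⟩

lemma mainLemma (G : TGraph V) (p : List (TEdge V)) (hp : TRP G p) :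
    ∃ q, TRP G q ∧ startV q = startV p ∧ endV q = endV p ∧
      routeOf q = routeOf p ∧ pdep q = pdep p ∧ parr q ≤ parr p ∧ UsefulDom G q := by
  induction p using List.reverseRecOn with
  | nil => exact absurd rfl hp.1
  | append_singleton l e ih =>
    rcases eq_or_ne l [] with rfl | hl
    · -- base case: single edge
      simp only [List.nil_append] at *
      set S : Set (TEdge V) :=
        {f | f ∈ G.edges ∧ f.tail = e.tail ∧ f.head = e.head ∧ f.dep = e.dep} with hS
      have heS : e ∈ S := ⟨hp.2.1 e (by simp), rfl, rfl, rfl⟩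
      obtain ⟨f, hfS, hfmin⟩ := exists_min_arr ⟨e, heS⟩
      obtain ⟨hfG, hft, hfh, hfd⟩ := hfS
      refine ⟨[f], ⟨by simp, by simpa using hfG, List.isChain_singleton f⟩, ?_, ?_, ?_, ?_, ?_, ?_⟩
      · simp [startV, hft]
      · simp [endV, hfh]
      · simp [routeOf, hft, hfh]
      · simp [pdep, hfd]
      · simp [parr]; exact hfmin e heS
      · intro j hj1 hj2
        simp at hj2
        interval_cases j
        simp only [List.take_succ_cons, List.take_nil]
        refine ⟨⟨by simp, by simpa using hfG, List.isChain_singleton f⟩, ?_⟩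
        intro r hr hrs hrr hrd
        have hrne := hr.1
        have hlen : r.length = 1 := by
          have := routeOf_length hrne
          rw [hrr] at this
          simp [routeOf, hft, hfh] at this
          omega
        obtain ⟨g, rfl⟩ : ∃ g, r = [g] := by
          cases r with
          | nil => simp at hlen
          | cons a t => cases t with
            | nil => exact ⟨a, rfl⟩
            | cons b t' => simp at hlen
        have hgG := hr.2.1 g (by simp)
        simp [routeOf, hft, hfh] at hrr
        simp [pdep, hfd] at hrd
        have : g ∈ S := ⟨hgG, hrr.1, hrr.2, hrd⟩
        simpa [parr] using hfmin g this
    · -- inductive step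
      obtain ⟨hTRPl, hendl, harre, heG⟩ := TRP_concat_decomp hl hp
      obtain ⟨q', hq'T, hq's, hq'e, hq'r, hq'd, hq'a, hq'U⟩ := ih hTRPl
      have hq'ne := hq'T.1
      have hq'end : endV q' = some e.tail := hq'e.trans hendl
      set S : Set (TEdge V) :=
        {f | f ∈ G.edges ∧ f.tail = e.tail ∧ f.head = e.head ∧ parr q' ≤ f.dep} with hS
      have heS : e ∈ S := ⟨heG, rfl, rfl, le_trans (hq'a.trans harre) le_rfl⟩
      obtain ⟨f, hfS, hfmin⟩ := exists_min_arr ⟨e, heS⟩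
      obtain ⟨hfG, hft, hfh, hfd⟩ := hfS
      have hTq : TRP G (q' ++ [f]) :=
        TRP_concat_build hq'T hfG (by rw [hq'end, hft]) hfd
      have hrouteq' : routeOf q' = q'.map TEdge.tail ++ [e.tail] :=
        routeOf_eq_of_endV hq'ne hq'end
      have hroutel : routeOf l = l.map TEdge.tail ++ [e.tail] :=
        routeOf_eq_of_endV hl hendl
      have hmapeq : q'.map TEdge.tail = l.map TEdge.tail := by
        have := hq'r
        rw [hrouteq', hroutel] at this
        exact List.append_inj' this rfl |>.1
      refine ⟨q' ++ [f], hTq, ?_, ?_, ?_, ?_, ?_, ?_⟩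
      · rw [startV_concat hq'ne, startV_concat hl, hq's]
      · rw [endV_concat, endV_concat, hfh]
      · rw [routeOf_concat, routeOf_concat, hmapeq, hft, hfh]
      · rw [pdep_concat hq'ne, pdep_concat hl, hq'd]
      · rw [parr_concat, parr_concat]; exact hfmin e heS
      · intro j hj1 hj2
        simp at hj2
        rcases lt_or_eq_of_le hj2 with hj | hj
        · have hj' : j ≤ q'.length := by omega
          rw [List.take_append_of_le_length hj']
          exact hq'U j hj1 hj'
        · rw [hj, List.take_of_length_le (by simp)]
          refine ⟨hTq, ?_⟩
          intro r hrT hrs hrr hrd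
          have hrne := hrT.1
          have hrlen : r.length = q'.length + 1 := by
            have h1 := routeOf_length hrne
            have h2 := routeOf_length (p := q' ++ [f]) (by simp)
            rw [hrr] at h1
            rw [h1] at h2
            simp at h2
            omega
          obtain ⟨r', g, hreq⟩ := (List.eq_nil_or_concat r).resolve_left hrne
          rw [List.concat_eq_append] at hreq
          subst hreq
          have hr'len : r'.length = q'.length := by simpa using hrlen
          have hr'ne : r' ≠ [] := by
            intro h; rw [h] at hr'len; simp at hr'len
            exact hq'ne (List.eq_nil_of_length_eq_zero hr'len.symm)
          obtain ⟨hTr', hendr', harrg, hgG⟩ := TRP_concat_decomp hr'ne hrT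
          -- from route equality extract components
          have hrr' : r'.map TEdge.tail ++ [g.tail, g.head]
              = q'.map TEdge.tail ++ [f.tail, f.head] := by
            rw [← routeOf_concat, ← routeOf_concat, hrr]
          have hmap2 : r'.map TEdge.tail = q'.map TEdge.tail ∧
              ([g.tail, g.head] : List V) = [f.tail, f.head] := by
            apply List.append_inj' hrr'
            rfl
          have hgt : g.tail = f.tail := by
            have h := hmap2.2; simp at h; exact h.1
          have hgh : g.head = f.head := by
            have := hmap2.2; simp at this; exact this.2
          -- r' dominates via q'
          have hDomq' : DomSelf G q' := by
            have := hq'U q'.length (by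
              rcases q' with _ | ⟨a, t⟩
              · exact absurd rfl hq'ne
              · simp) le_rfl
            rwa [List.take_length] at this
          have hrouter' : routeOf r' = routeOf q' := by
            rw [routeOf_eq_of_endV hr'ne hendr', hrouteq', hmap2.1, hgt, hft]
          have hstartr' : startV r' = startV q' := by
            rw [← startV_concat hr'ne g, ← startV_concat hq'ne f, hrs,
              startV_concat hq'ne]
          have hdepr' : pdep r' = pdep q' := by
            rw [← pdep_concat hr'ne g, ← pdep_concat hq'ne f, hrd,
              pdep_concat hq'ne]
          have hq'r' : parr q' ≤ parr r' := hDomq'.2 r' hTr' hstartr' hrouter' hdepr'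
          have hgS : g ∈ S := ⟨hgG, hgt.trans hft, hgh.trans hfh, le_trans hq'r' harrg⟩
          rw [parr_concat, parr_concat]
          exact hfmin g hgS

end Aux

theorem stmt2 (G : TGraph V) (s z : V) (rt : ℕ) (P : List (TEdge V))
    (hP : EAPath G s z rt P) :
    ∃ Q, TRP G Q ∧ startV Q = some s ∧ endV Q = some z ∧
      routeOf Q = routeOf P ∧ pdep Q = pdep P ∧ parr Q = parr P ∧ UsefulDom G Q := by
  obtain ⟨hT, hs, he, hrt, hmin⟩ := hP
  obtain ⟨Q, hQT, hQs, hQe, hQr, hQd, hQa, hQU⟩ := mainLemma G P hT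
  have h1 : parr P ≤ parr Q :=
    hmin Q hQT (hQs.trans hs) (hQe.trans he) (hQd ▸ hrt)
  exact ⟨Q, hQT, hQs.trans hs, hQe.trans he, hQr, hQd, le_antisymm hQa h1, hQU⟩
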